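/- Let G be a finite group with a normal Sylow p-subgroup S such that C_G(S) ≤ S, and suppose α ∈ Aut(G) restricts to the identity on S. Then α is an inner automorphism given by conjugation by an element of S. -/

import Mathlib

/-- If a finite group `G` has a normal Sylow `p`-subgroup `S` with `C_G(S) ≤ S`, then any
automorphism of `G` restricting to the identity on `S` is conjugation by an element of `S`. -/
theorem stmt_8 (p : ℕ) [Fact p.Prime] (G : Type*) [Group G] [Finite G]
    (S : Sylow p G) (hnorm : (S : Subgroup G).Normal)
    (hcent : Subgroup.centralizer (S : Subgroup G) ≤ (S : Subgroup G))
    (α : MulAut G) (hα : ∀ x ∈ (S : Subgroup G), α x = x) :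
    ∃ s ∈ (S : Subgroup G), α = MulAut.conj s := by
  classical
  haveI := hnorm
  set A : Subgroup G := Subgroup.centralizer ((S : Subgroup G) : Set G) with hA
  -- every `g⁻¹ * α g` lies in the centralizer of `S`
  have hf : ∀ g : G, g⁻¹ * α g ∈ A := by
    intro g
    rw [hA, Subgroup.mem_centralizer_iff]
    intro x hx
    have hx' : g * x * g⁻¹ ∈ (S : Subgroup G) := hnorm.conj_mem x hx g
    have h2 : α g * x * (α g)⁻¹ = g * x * g⁻¹ := by
      have h1 : α (g * x * g⁻¹) = g * x * g⁻¹ := hα _ hx'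
      rw [map_mul, map_mul, map_inv, hα x hx] at h1
      exact h1
    calc x * (g⁻¹ * α g) = g⁻¹ * (g * x * g⁻¹ * α g) := by group
      _ = g⁻¹ * (α g * x * (α g)⁻¹ * α g) := by rw [h2]
      _ = g⁻¹ * α g * x := by group
  -- the centralizer is commutative since it is contained in `S`
  have hcomm : ∀ a b : A, (a : G) * b = (b : G) * a := by
    intro a b
    exact Subgroup.mem_centralizer_iff.mp b.2 a (hcent a.2)
  letI : CommGroup A := { (inferInstance : Group A) with mul_comm := fun a b => Subtype.ext (hcomm a b) }
  -- conjugation action on `A`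
  have hAmem : ∀ (h a : G), a ∈ A → h⁻¹ * a * h ∈ A := by
    intro h a ha
    rw [hA, Subgroup.mem_centralizer_iff]
    intro x hx
    have hx' : h * x * h⁻¹ ∈ (S : Subgroup G) := hnorm.conj_mem x hx h
    have hc : (h * x * h⁻¹) * a = a * (h * x * h⁻¹) :=
      Subgroup.mem_centralizer_iff.mp ha _ hx'
    calc x * (h⁻¹ * a * h) = h⁻¹ * ((h * x * h⁻¹) * a) * h := by group
      _ = h⁻¹ * (a * (h * x * h⁻¹)) * h := by rw [hc]
      _ = (h⁻¹ * a * h) * x := by group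
  let κ : G → (A →* A) := fun h =>
    { toFun := fun a => ⟨h⁻¹ * (a : G) * h, hAmem h a a.2⟩
      map_one' := by ext; simp
      map_mul' := by intro a b; ext; push_cast; group }
  -- the 1-cocycle
  let F : G → A := fun g => ⟨g⁻¹ * α g, hf g⟩
  have hco : ∀ g h : G, F (g * h) = κ h (F g) * F h := by
    intro g h
    apply Subtype.ext
    show (g * h)⁻¹ * α (g * h) = (h⁻¹ * (g⁻¹ * α g) * h) * (h⁻¹ * α h)
    rw [map_mul]
    group
  have hconst : ∀ (g s : G), s ∈ (S : Subgroup G) → F (g * s) = F g := by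
    intro g s hs
    apply Subtype.ext
    show (g * s)⁻¹ * α (g * s) = g⁻¹ * α g
    rw [map_mul, hα s hs]
    have hc : s * (g⁻¹ * α g) = (g⁻¹ * α g) * s :=
      Subgroup.mem_centralizer_iff.mp (hf g) s hs
    calc (g * s)⁻¹ * (α g * s) = s⁻¹ * ((g⁻¹ * α g) * s) := by group
      _ = s⁻¹ * (s * (g⁻¹ * α g)) := by rw [← hc]
      _ = g⁻¹ * α g := by group
  have hbar : ∀ g g' : G, (g : G ⧸ (S : Subgroup G)) = (g' : G ⧸ (S : Subgroup G)) →
      F g = F g' := by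
    intro g g' hgg'
    have hs : g⁻¹ * g' ∈ (S : Subgroup G) := QuotientGroup.eq.mp hgg'
    have : g * (g⁻¹ * g') = g' := by group
    rw [← this, hconst g _ hs]
  -- sum over the quotient
  letI : Fintype (G ⧸ (S : Subgroup G)) := Fintype.ofFinite _
  set n : ℕ := Fintype.card (G ⧸ (S : Subgroup G)) with hn
  set X : A := ∏ q : G ⧸ (S : Subgroup G), F (Quotient.out q) with hX
  have key : ∀ h : G, (F h) ^ n = X * (κ h X)⁻¹ := by
    intro h
    have h1 : ∏ q : G ⧸ (S : Subgroup G), F (Quotient.out (q * (h : G ⧸ (S : Subgroup G))))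
        = X := Equiv.prod_comp (Equiv.mulRight ((h : G ⧸ (S : Subgroup G))))
          (fun q => F (Quotient.out q))
    have h2 : ∀ q : G ⧸ (S : Subgroup G),
        F (Quotient.out (q * (h : G ⧸ (S : Subgroup G)))) = κ h (F (Quotient.out q)) * F h := by
      intro q
      have hq : QuotientGroup.mk (s := (S : Subgroup G))
            (Quotient.out (q * QuotientGroup.mk h))
          = QuotientGroup.mk (Quotient.out q * h) := by
        rw [QuotientGroup.mk_mul, QuotientGroup.out_eq', QuotientGroup.out_eq']
      rw [hbar _ _ hq, hco]
    rw [Finset.prod_congr rfl (fun q _ => h2 q), Finset.prod_mul_distrib, ← map_prod, ← hX,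
      Finset.prod_const, Finset.card_univ, ← hn] at h1
    calc (F h) ^ n = ((κ h) X)⁻¹ * ((κ h) X * F h ^ n) := by group
      _ = ((κ h) X)⁻¹ * X := by rw [h1]
      _ = X * ((κ h) X)⁻¹ := mul_comm _ _
  -- coprimality and extraction of an n-th root
  have hAS : A ≤ (S : Subgroup G) := hcent
  have hdvd : Nat.card A ∣ Nat.card (S : Subgroup G) := Subgroup.card_dvd_of_le hAS
  have hcop : (Nat.card A).Coprime n := by
    have h3 : (Nat.card (S : Subgroup G)).Coprime ((S : Subgroup G)).index :=
      S.card_coprime_index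
    have h4 : ((S : Subgroup G)).index = n := by
      rw [Subgroup.index, Nat.card_eq_fintype_card, hn]
    rw [← h4]
    exact Nat.Coprime.coprime_dvd_left hdvd h3
  set Y : A := (powCoprime hcop).symm X with hYdef
  have hY : Y ^ n = X := (powCoprime hcop).apply_symm_apply X
  have hinj : Function.Injective (fun a : A => a ^ n) := (powCoprime hcop).injective
  have hFh : ∀ h : G, F h = Y * (κ h Y)⁻¹ := by
    intro h
    apply hinj
    show (F h) ^ n = (Y * (κ h Y)⁻¹) ^ n
    rw [key h, mul_pow, inv_pow, ← map_pow (κ h), hY]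
  -- conclusion
  refine ⟨(Y : G)⁻¹, inv_mem (hcent Y.2), ?_⟩
  ext h
  have hc : h⁻¹ * α h = h⁻¹ * (Y : G)⁻¹ * h * (Y : G) := by
    have := congrArg (Subtype.val) (hFh h)
    rw [mul_comm] at this
    calc h⁻¹ * α h = ((F h : A) : G) := rfl
      _ = (((κ h Y)⁻¹ * Y : A) : G) := this
      _ = (h⁻¹ * (Y : G) * h)⁻¹ * (Y : G) := rfl
      _ = h⁻¹ * (Y : G)⁻¹ * h * (Y : G) := by group
  show α h = (Y : G)⁻¹ * h * ((Y : G)⁻¹)⁻¹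
  calc α h = h * (h⁻¹ * α h) := by group
    _ = h * (h⁻¹ * (Y : G)⁻¹ * h * (Y : G)) := by rw [hc]
    _ = (Y : G)⁻¹ * h * ((Y : G)⁻¹)⁻¹ := by group
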